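/- Let r and s be nonzero integers that are relatively prime to each other and such that neither r nor s is divisible by 3. Then the polynomial X³ − 3X − (3r/s) is irreducible over ℚ. -/

import Mathlib

open Polynomial

lemma no_rat_root (r s : ℤ) (hs : s ≠ 0) (hrs : IsCoprime r s)
    (hr3 : ¬ (3 : ℤ) ∣ r) (hs3 : ¬ (3 : ℤ) ∣ s) (q : ℚ)
    (hq : q ^ 3 - 3 * q - (3 * r : ℚ) / (s : ℚ) = 0) : False := by
  have hd : (q.den : ℤ) ≠ 0 := by exact_mod_cast q.den_nz
  have hdq : ((q.den : ℤ) : ℚ) ≠ 0 := by exact_mod_cast hd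
  have hsq : ((s : ℤ) : ℚ) ≠ 0 := Int.cast_ne_zero.mpr hs
  set n : ℤ := q.num with hn
  set d : ℤ := (q.den : ℤ) with hdd
  have hqnd : (q : ℚ) = (n : ℚ) / (d : ℚ) := by
    rw [hn, hdd]; push_cast; exact (Rat.num_div_den q).symm
  have key' : d * (s * n ^ 3 - 3 * s * n * d ^ 2 - 3 * r * d ^ 3) = 0 := by
    have : ((d * (s * n ^ 3 - 3 * s * n * d ^ 2 - 3 * r * d ^ 3) : ℤ) : ℚ) = 0 := by
      push_cast
      rw [hqnd] at hq
      field_simp at hq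
      linear_combination (d : ℚ) * hq
    exact_mod_cast this
  have key : s * n ^ 3 - 3 * s * n * d ^ 2 - 3 * r * d ^ 3 = 0 :=
    (mul_eq_zero.mp key').resolve_left hd
  have p3 : Prime (3 : ℤ) := Int.prime_three
  have h3n : (3 : ℤ) ∣ n := by
    have : (3 : ℤ) ∣ s * n ^ 3 := ⟨s * n * d ^ 2 + r * d ^ 3, by linarith⟩
    rcases p3.dvd_mul.mp this with h | h
    · exact absurd h hs3
    · exact p3.dvd_of_dvd_pow h
  obtain ⟨m, hm3⟩ := h3n
  rw [hm3] at key
  have h3d : (3 : ℤ) ∣ d := by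
    have h9 : (3 : ℤ) * (r * d ^ 3) = 3 * (3 * (3 * s * m ^ 3 - s * m * d ^ 2)) := by
      linear_combination -key
    have : (3 : ℤ) ∣ r * d ^ 3 :=
      ⟨3 * s * m ^ 3 - s * m * d ^ 2, mul_left_cancel₀ (by norm_num) h9⟩
    rcases p3.dvd_mul.mp this with h | h
    · exact absurd h hr3
    · exact p3.dvd_of_dvd_pow h
  have hcop : IsCoprime n d := by
    rw [hn, hdd, Int.isCoprime_iff_gcd_eq_one]
    exact q.reduced
  have : IsUnit (3 : ℤ) := hcop.isUnit_of_dvd' ⟨m, hm3⟩ h3d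
  rw [Int.isUnit_iff] at this
  omega

/-- If `r` and `s` are nonzero integers, relatively prime to each other, and neither is
divisible by `3`, then `X³ - 3X - 3r/s` is irreducible over `ℚ`. -/
theorem irreducible_X_cubed_sub_three_X_sub_three_r_div_s
    (r s : ℤ) (hr : r ≠ 0) (hs : s ≠ 0) (hrs : IsCoprime r s)
    (hr3 : ¬ (3 : ℤ) ∣ r) (hs3 : ¬ (3 : ℤ) ∣ s) :
    Irreducible (X ^ 3 - 3 * X - C ((3 * r : ℚ) / (s : ℚ)) : Polynomial ℚ) := by
  set p : Polynomial ℚ := X ^ 3 - 3 * X - C ((3 * r : ℚ) / (s : ℚ)) with hp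
  have hm : p.Monic := by
    unfold p; monicity!
  have hdeg : p.natDegree = 3 := by
    unfold p; compute_degree!
  rw [hm.irreducible_iff_roots_eq_zero_of_degree_le_three (by omega) (by omega)]
  rw [Multiset.eq_zero_iff_forall_notMem]
  intro q hq
  rw [mem_roots hm.ne_zero] at hq
  have : q ^ 3 - 3 * q - (3 * r : ℚ) / (s : ℚ) = 0 := by
    simpa [hp, IsRoot] using hq
  exact no_rat_root r s hs hrs hr3 hs3 q this
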